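/- arXiv:2003.11869 — 2 statements merged into one kernel-verified Lean document; each statement's English description precedes it below -/
import Mathlib

section
/- For any symmetric positive semi-definite matrix L of size p and the map (A,B) ↦ ⟨⟨L, Bᵗ A^{-1} B⟩⟩^β = (tr(L Bᵗ A^{-1} B))^β with β ≥ 1, the map is jointly convex on pairs (A,B) with A symmetric positive definite q×q and B ∈ ℝ^{q×p}. -/
open Matrix

noncomputable def fip {m n : ℕ} (A B : Matrix (Fin m) (Fin n) ℝ) : ℝ := (Aᵀ * B).trace

section helpers

variable {k : Type*} [Fintype k] [DecidableEq k]

lemma psd_smul {M : Matrix k k ℝ} (hM : M.PosSemidef) {c : ℝ} (hc : 0 ≤ c) :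
    (c • M).PosSemidef := by
  refine Matrix.PosSemidef.of_dotProduct_mulVec_nonneg ?_ fun x => ?_
  · have := hM.1
    unfold Matrix.IsHermitian at *
    rw [conjTranspose_smul, this]
    simp
  · rw [smul_mulVec, dotProduct_smul, smul_eq_mul]
    exact mul_nonneg hc (hM.dotProduct_mulVec_nonneg x)

lemma posdef_comb {A₁ A₂ : Matrix k k ℝ} (hA₁ : A₁.PosDef) (hA₂ : A₂.PosDef)
    {h : ℝ} (h0 : 0 ≤ h) (h1 : h ≤ 1) : (h • A₁ + (1 - h) • A₂).PosDef := by
  refine Matrix.PosDef.of_dotProduct_mulVec_pos ?_ fun x hx => ?_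
  · have e1 := hA₁.1; have e2 := hA₂.1
    unfold Matrix.IsHermitian at *
    rw [conjTranspose_add, conjTranspose_smul, conjTranspose_smul, e1, e2]
    simp
  · rw [add_mulVec, smul_mulVec, smul_mulVec, dotProduct_add,
      dotProduct_smul, dotProduct_smul, smul_eq_mul, smul_eq_mul]
    rcases eq_or_lt_of_le h0 with rfl | hpos
    · simpa using hA₂.dotProduct_mulVec_pos hx
    · have t1 := hA₁.dotProduct_mulVec_pos hx
      have t2 := (hA₂.posSemidef).dotProduct_mulVec_nonneg x
      nlinarith

lemma trace_psd_nonneg {M : Matrix k k ℝ} (hM : M.PosSemidef) : 0 ≤ M.trace := by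
  rw [Matrix.trace]
  refine Finset.sum_nonneg fun i _ => ?_
  have := hM.dotProduct_mulVec_nonneg (Pi.single i 1)
  simpa [Matrix.diag, dotProduct, mulVec, Pi.single_apply, Finset.mul_sum,
    Finset.sum_ite_eq, Finset.sum_ite_eq'] using this

lemma trace_mul_psd_nonneg {L M : Matrix k k ℝ} (hL : L.PosSemidef) (hM : M.PosSemidef) :
    0 ≤ (L * M).trace := by
  open scoped MatrixOrder in
  obtain ⟨D, rfl⟩ := CStarAlgebra.nonneg_iff_eq_star_mul_self.mp hM.nonneg
  rw [Matrix.star_eq_conjTranspose]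
  have : (L * (Dᴴ * D)).trace = (D * L * Dᴴ).trace := by
    rw [← Matrix.mul_assoc, ← Matrix.trace_mul_cycle]
    exact (Matrix.trace_mul_cycle D L Dᴴ).symm
  rw [this]
  exact trace_psd_nonneg (hL.mul_mul_conjTranspose_same D)

end helpers

theorem rpow_trace_convex {q p : ℕ} (L : Matrix (Fin p) (Fin p) ℝ) (hL : L.PosSemidef)
    (β : ℝ) (hβ : 1 ≤ β)
    (A₁ A₂ : Matrix (Fin q) (Fin q) ℝ) (B₁ B₂ : Matrix (Fin q) (Fin p) ℝ)
    (hA₁ : A₁.PosDef) (hA₂ : A₂.PosDef) (h : ℝ) (h0 : 0 ≤ h) (h1 : h ≤ 1) :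
    Real.rpow (fip L ((h • B₁ + (1 - h) • B₂)ᵀ * (h • A₁ + (1 - h) • A₂)⁻¹
        * (h • B₁ + (1 - h) • B₂))) β
      ≤ h * Real.rpow (fip L (B₁ᵀ * A₁⁻¹ * B₁)) β
        + (1 - h) * Real.rpow (fip L (B₂ᵀ * A₂⁻¹ * B₂)) β := by
  set A := h • A₁ + (1 - h) • A₂ with hAdef
  set B := h • B₁ + (1 - h) • B₂ with hBdef
  have hA : A.PosDef := posdef_comb hA₁ hA₂ h0 h1
  have h1' : 0 ≤ 1 - h := by linarith
  -- transpose = conjTranspose over ℝ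
  have hct : ∀ {a b : ℕ} (M : Matrix (Fin a) (Fin b) ℝ), Mᴴ = Mᵀ := fun M => by
    ext i j; simp [conjTranspose_apply]
  -- block matrices
  have hM₁ : (fromBlocks A₁ B₁ B₁ᴴ (B₁ᴴ * A₁⁻¹ * B₁)).PosSemidef := by
    haveI := hA₁.isUnit.invertible
    rw [Matrix.PosDef.fromBlocks₁₁ _ _ hA₁]
    simpa using Matrix.PosSemidef.zero
  have hM₂ : (fromBlocks A₂ B₂ B₂ᴴ (B₂ᴴ * A₂⁻¹ * B₂)).PosSemidef := by
    haveI := hA₂.isUnit.invertible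
    rw [Matrix.PosDef.fromBlocks₁₁ _ _ hA₂]
    simpa using Matrix.PosSemidef.zero
  have hsum : (fromBlocks A B Bᴴ
      (h • (B₁ᴴ * A₁⁻¹ * B₁) + (1 - h) • (B₂ᴴ * A₂⁻¹ * B₂))).PosSemidef := by
    have : fromBlocks A B Bᴴ
        (h • (B₁ᴴ * A₁⁻¹ * B₁) + (1 - h) • (B₂ᴴ * A₂⁻¹ * B₂))
        = h • fromBlocks A₁ B₁ B₁ᴴ (B₁ᴴ * A₁⁻¹ * B₁)
          + (1 - h) • fromBlocks A₂ B₂ B₂ᴴ (B₂ᴴ * A₂⁻¹ * B₂) := by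
      ext (i | i) (j | j) <;>
        simp [fromBlocks, hAdef, hBdef, conjTranspose_apply, mul_comm]
    rw [this]
    exact (psd_smul hM₁ h0).add (psd_smul hM₂ h1')
  haveI := hA.isUnit.invertible
  have hSchur : (h • (B₁ᴴ * A₁⁻¹ * B₁) + (1 - h) • (B₂ᴴ * A₂⁻¹ * B₂)
      - Bᴴ * A⁻¹ * B).PosSemidef :=
    (Matrix.PosDef.fromBlocks₁₁ _ _ hA).mp hsum
  -- the key psd facts
  have hC : (Bᴴ * A⁻¹ * B).PosSemidef := hA.inv.posSemidef.conjTranspose_mul_mul_same B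
  have hC₁ : (B₁ᴴ * A₁⁻¹ * B₁).PosSemidef := hA₁.inv.posSemidef.conjTranspose_mul_mul_same B₁
  have hC₂ : (B₂ᴴ * A₂⁻¹ * B₂).PosSemidef := hA₂.inv.posSemidef.conjTranspose_mul_mul_same B₂
  have hLt : Lᵀ = L := by rw [← hct L, hL.1]
  have fip_eq : ∀ M : Matrix (Fin p) (Fin p) ℝ, fip L M = (L * M).trace := fun M => by
    rw [fip, hLt]
  -- trace inequality
  have key : fip L (Bᴴ * A⁻¹ * B)
      ≤ h * fip L (B₁ᴴ * A₁⁻¹ * B₁) + (1 - h) * fip L (B₂ᴴ * A₂⁻¹ * B₂) := by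
    have hd := trace_mul_psd_nonneg hL hSchur
    rw [Matrix.mul_sub, Matrix.mul_add, Matrix.trace_sub, Matrix.trace_add, sub_nonneg,
      Matrix.mul_smul, Matrix.mul_smul, Matrix.trace_smul, Matrix.trace_smul] at hd
    simpa [fip_eq, smul_eq_mul] using hd
  have s0 : 0 ≤ fip L (Bᴴ * A⁻¹ * B) := by rw [fip_eq]; exact trace_mul_psd_nonneg hL hC
  have c10 : 0 ≤ fip L (B₁ᴴ * A₁⁻¹ * B₁) := by rw [fip_eq]; exact trace_mul_psd_nonneg hL hC₁
  have c20 : 0 ≤ fip L (B₂ᴴ * A₂⁻¹ * B₂) := by rw [fip_eq]; exact trace_mul_psd_nonneg hL hC₂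
  -- convexity of rpow
  have conv := (convexOn_rpow hβ).2 (Set.mem_Ici.mpr c10) (Set.mem_Ici.mpr c20)
    h0 h1' (by ring)
  simp only [smul_eq_mul] at conv
  have mono : Real.rpow (fip L (Bᴴ * A⁻¹ * B)) β
      ≤ Real.rpow (h * fip L (B₁ᴴ * A₁⁻¹ * B₁) + (1 - h) * fip L (B₂ᴴ * A₂⁻¹ * B₂)) β :=
    Real.rpow_le_rpow s0 key (by linarith)
  have final := mono.trans conv
  -- rewrite ᴴ into ᵀ
  rw [hct B, hct B₁, hct B₂] at final
  exact final
end

section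
/- The function L_n(Ω_yy, Ω_yx) = −ln det(Ω_yy) + ⟨⟨S_yy, Ω_yy⟩⟩ + 2⟨⟨S_yx, Ω_yx⟩⟩ + ⟨⟨S_xx, Ω_yxᵗ Ω_yy^{-1} Ω_yx⟩⟩ + η⟨⟨L, Ω_yxᵗ Ω_yy^{-1} Ω_yx⟩⟩^β + λ|Ω_yy|₁⁻ + μ|Ω_yx|₁ is jointly convex in (Ω_yy, Ω_yx) on S₊₊^q × ℝ^{q×p}, for any β ≥ 1, η, λ, μ ≥ 0, symmetric positive semi-definite matrices S_yy, S_xx, L, and arbitrary S_yx. -/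
open Matrix

noncomputable def l1norm {m n : ℕ} (A : Matrix (Fin m) (Fin n) ℝ) : ℝ :=
  ∑ i, ∑ j, |A i j|

noncomputable def l1minus {q : ℕ} (A : Matrix (Fin q) (Fin q) ℝ) : ℝ :=
  ∑ i, ∑ j, if i = j then 0 else |A i j|


section AuxLemmas
open Matrix Finset Real

open scoped MatrixOrder in
noncomputable def Matrix.PosSemidef.sqrt {m : ℕ} {A : Matrix (Fin m) (Fin m) ℝ} (_ : A.PosSemidef) :
    Matrix (Fin m) (Fin m) ℝ := CFC.sqrt A

open scoped MatrixOrder in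
lemma Matrix.PosSemidef.posSemidef_sqrt {m : ℕ} {A : Matrix (Fin m) (Fin m) ℝ} (hA : A.PosSemidef) :
    hA.sqrt.PosSemidef := Matrix.nonneg_iff_posSemidef.mp (CFC.sqrt_nonneg A)

open scoped MatrixOrder in
lemma Matrix.PosSemidef.sqrt_mul_self {m : ℕ} {A : Matrix (Fin m) (Fin m) ℝ} (hA : A.PosSemidef) :
    hA.sqrt * hA.sqrt = A := CFC.sqrt_mul_sqrt_self A hA.nonneg

private lemma psd_diag_nonneg {m : ℕ} {M : Matrix (Fin m) (Fin m) ℝ} (hM : M.PosSemidef) (i : Fin m) :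
    0 ≤ M i i := by
  have := hM.dotProduct_mulVec_nonneg (Pi.single i 1)
  simpa [dotProduct, mulVec, Pi.single_apply, Finset.mul_sum] using this

private lemma psd_trace_nonneg {m : ℕ} {M : Matrix (Fin m) (Fin m) ℝ} (hM : M.PosSemidef) :
    0 ≤ M.trace := by
  rw [Matrix.trace]
  exact Finset.sum_nonneg fun i _ => psd_diag_nonneg hM i

private lemma real_conjTranspose' {a b : ℕ} (M : Matrix (Fin a) (Fin b) ℝ) : Mᴴ = Mᵀ := by
  ext i j; simp [conjTranspose_apply]

private lemma star_vec {m : ℕ} (x : Fin m → ℝ) : star x = x := funext fun i => star_trivial _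

private lemma trace_mul_nonneg {m : ℕ} {A B : Matrix (Fin m) (Fin m) ℝ}
    (hA : A.PosSemidef) (hB : B.PosSemidef) : 0 ≤ (A * B).trace := by
  have hs := hB.posSemidef_sqrt
  have h1 : A * B = (A * hB.sqrt) * hB.sqrt := by rw [Matrix.mul_assoc, hB.sqrt_mul_self]
  rw [h1, Matrix.trace_mul_comm]
  have h2 : hB.sqrt * (A * hB.sqrt) = hB.sqrtᴴ * A * hB.sqrt := by
    rw [hs.1, Matrix.mul_assoc]
  rw [h2]
  exact psd_trace_nonneg (hA.conjTranspose_mul_mul_same _)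

private lemma fip_nonneg {m : ℕ} {S M : Matrix (Fin m) (Fin m) ℝ}
    (hS : S.PosSemidef) (hM : M.PosSemidef) : 0 ≤ fip S M := by
  unfold fip
  rw [show Sᵀ = S from by rw [← real_conjTranspose']; exact hS.1.eq]
  exact trace_mul_nonneg hS hM

private lemma fip_add_smul {m n : ℕ} (S A B : Matrix (Fin m) (Fin n) ℝ) (a b : ℝ) :
    fip S (a • A + b • B) = a * fip S A + b * fip S B := by
  unfold fip
  rw [Matrix.mul_add, Matrix.mul_smul, Matrix.mul_smul, Matrix.trace_add,
    Matrix.trace_smul, Matrix.trace_smul]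
  simp [smul_eq_mul]

private lemma fip_sub {m n : ℕ} (S A B : Matrix (Fin m) (Fin n) ℝ) :
    fip S (A - B) = fip S A - fip S B := by
  unfold fip
  rw [Matrix.mul_sub, Matrix.trace_sub]

private lemma psd_tmul {a b : ℕ} (Q : Matrix (Fin a) (Fin b) ℝ) {P : Matrix (Fin a) (Fin a) ℝ}
    (hP : P.PosSemidef) : (Qᵀ * P * Q).PosSemidef := by
  have := hP.conjTranspose_mul_mul_same Q
  rwa [real_conjTranspose'] at this

private lemma herm_smul {m : ℕ} {M : Matrix (Fin m) (Fin m) ℝ} (hM : M.IsHermitian) (s : ℝ) :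
    (s • M).IsHermitian := by
  show (s • M)ᴴ = s • M
  rw [Matrix.conjTranspose_smul, star_trivial, hM.eq]

private lemma quad_ineq {m : ℕ} {P : Matrix (Fin m) (Fin m) ℝ} (hP : P.PosDef)
    (u y : Fin m → ℝ) :
    2 * (y ⬝ᵥ u) - y ⬝ᵥ P *ᵥ y ≤ u ⬝ᵥ P⁻¹ *ᵥ u := by
  have hdet : IsUnit P.det := isUnit_iff_ne_zero.mpr hP.det_pos.ne'
  have hPsymm : Pᵀ = P := by rw [← real_conjTranspose']; exact hP.1.eq
  set w := P⁻¹ *ᵥ u with hw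
  have hPw : P *ᵥ w = u := by
    rw [hw, Matrix.mulVec_mulVec, Matrix.mul_nonsing_inv _ hdet, Matrix.one_mulVec]
  have h0 := hP.posSemidef.dotProduct_mulVec_nonneg (y - w)
  rw [_root_.star_vec] at h0
  have h1 : w ⬝ᵥ P *ᵥ y = y ⬝ᵥ u := by
    rw [Matrix.dotProduct_mulVec, ← Matrix.mulVec_transpose, hPsymm, hPw, dotProduct_comm]
  have h2 : w ⬝ᵥ u = u ⬝ᵥ P⁻¹ *ᵥ u := dotProduct_comm _ _
  have hexp : (y - w) ⬝ᵥ P *ᵥ (y - w)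
      = y ⬝ᵥ P *ᵥ y - 2 * (y ⬝ᵥ u) + u ⬝ᵥ P⁻¹ *ᵥ u := by
    rw [Matrix.mulVec_sub, hPw, sub_dotProduct, dotProduct_sub,
      dotProduct_sub, h1, h2]
    ring
  rw [hexp] at h0
  linarith

private lemma qform {a b : ℕ} (P : Matrix (Fin a) (Fin a) ℝ) (Q : Matrix (Fin a) (Fin b) ℝ)
    (x : Fin b → ℝ) :
    x ⬝ᵥ (Qᵀ * P * Q) *ᵥ x = (Q *ᵥ x) ⬝ᵥ P *ᵥ (Q *ᵥ x) := by
  rw [← Matrix.mulVec_mulVec, ← Matrix.mulVec_mulVec, Matrix.dotProduct_mulVec,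
    ← Matrix.mulVec_transpose, Matrix.transpose_transpose]

private lemma mix_posDef {m : ℕ} {A B : Matrix (Fin m) (Fin m) ℝ} (hA : A.PosDef) (hB : B.PosDef)
    {t : ℝ} (ht0 : 0 ≤ t) (ht1 : t ≤ 1) : (t • A + (1 - t) • B).PosDef := by
  have hsm : ∀ (C : Matrix (Fin m) (Fin m) ℝ) (s : ℝ), C.PosDef → 0 < s → (s • C).PosDef := by
    intro C s hC hs
    refine Matrix.PosDef.of_dotProduct_mulVec_pos (herm_smul hC.1 s) fun x hx => ?_
    rw [Matrix.smul_mulVec, dotProduct_smul, smul_eq_mul]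
    exact mul_pos hs (hC.dotProduct_mulVec_pos hx)
  rcases eq_or_lt_of_le ht0 with h | h
  · simpa [← h] using hB
  rcases eq_or_lt_of_le ht1 with h' | h'
  · simpa [h'] using hA
  exact (hsm A t hA h).add (hsm B (1 - t) hB (by linarith))

private lemma herm_tmul {a b : ℕ} (Q : Matrix (Fin a) (Fin b) ℝ) {N : Matrix (Fin a) (Fin a) ℝ}
    (hN : N.IsHermitian) : (Qᵀ * N * Q).IsHermitian := by
  rw [← real_conjTranspose']
  exact Matrix.isHermitian_conjTranspose_mul_mul Q hN

private lemma schur_mix {a b : ℕ} {P₁ P₂ : Matrix (Fin a) (Fin a) ℝ} {Q₁ Q₂ : Matrix (Fin a) (Fin b) ℝ}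
    (h1 : P₁.PosDef) (h2 : P₂.PosDef) {t : ℝ} (ht0 : 0 ≤ t) (ht1 : t ≤ 1) :
    (t • (Q₁ᵀ * P₁⁻¹ * Q₁) + (1 - t) • (Q₂ᵀ * P₂⁻¹ * Q₂)
      - ((t • Q₁ + (1 - t) • Q₂)ᵀ * (t • P₁ + (1 - t) • P₂)⁻¹ * (t • Q₁ + (1 - t) • Q₂))).PosSemidef := by
  set P := t • P₁ + (1 - t) • P₂ with hPdef
  set Q := t • Q₁ + (1 - t) • Q₂ with hQdef
  have hP : P.PosDef := mix_posDef h1 h2 ht0 ht1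
  refine Matrix.PosSemidef.of_dotProduct_mulVec_nonneg ?_ ?_
  · exact ((herm_smul (herm_tmul Q₁ h1.inv.1) t).add
      (herm_smul (herm_tmul Q₂ h2.inv.1) (1-t))).sub (herm_tmul Q hP.inv.1)
  · intro x
    rw [_root_.star_vec]
    have hexp : x ⬝ᵥ (t • (Q₁ᵀ * P₁⁻¹ * Q₁) + (1 - t) • (Q₂ᵀ * P₂⁻¹ * Q₂)
        - (Qᵀ * P⁻¹ * Q)) *ᵥ x
        = t * ((Q₁ *ᵥ x) ⬝ᵥ P₁⁻¹ *ᵥ (Q₁ *ᵥ x)) + (1 - t) * ((Q₂ *ᵥ x) ⬝ᵥ P₂⁻¹ *ᵥ (Q₂ *ᵥ x))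
          - (Q *ᵥ x) ⬝ᵥ P⁻¹ *ᵥ (Q *ᵥ x) := by
      rw [Matrix.sub_mulVec, Matrix.add_mulVec, Matrix.smul_mulVec, Matrix.smul_mulVec,
        dotProduct_sub, dotProduct_add, dotProduct_smul, dotProduct_smul,
        qform, qform, qform]
      simp [smul_eq_mul]
    rw [hexp]
    set u₁ := Q₁ *ᵥ x
    set u₂ := Q₂ *ᵥ x
    set u := Q *ᵥ x with hu
    have huu : u = t • u₁ + (1 - t) • u₂ := by
      rw [hu, hQdef, Matrix.add_mulVec, Matrix.smul_mulVec, Matrix.smul_mulVec]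
    set y := P⁻¹ *ᵥ u with hy
    have hdet : IsUnit P.det := isUnit_iff_ne_zero.mpr hP.det_pos.ne'
    have hPy : P *ᵥ y = u := by
      rw [hy, Matrix.mulVec_mulVec, Matrix.mul_nonsing_inv _ hdet, Matrix.one_mulVec]
    have hq : u ⬝ᵥ P⁻¹ *ᵥ u = 2 * (y ⬝ᵥ u) - y ⬝ᵥ P *ᵥ y := by
      rw [hPy, ← hy, dotProduct_comm u y]
      ring
    have hyu : y ⬝ᵥ u = t * (y ⬝ᵥ u₁) + (1 - t) * (y ⬝ᵥ u₂) := by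
      rw [huu, dotProduct_add, dotProduct_smul, dotProduct_smul]
      simp [smul_eq_mul]
    have hyPy : y ⬝ᵥ P *ᵥ y = t * (y ⬝ᵥ P₁ *ᵥ y) + (1 - t) * (y ⬝ᵥ P₂ *ᵥ y) := by
      rw [hPdef, Matrix.add_mulVec, Matrix.smul_mulVec, Matrix.smul_mulVec,
        dotProduct_add, dotProduct_smul, dotProduct_smul]
      simp [smul_eq_mul]
    have k1 : 2 * (y ⬝ᵥ u₁) - y ⬝ᵥ P₁ *ᵥ y ≤ u₁ ⬝ᵥ P₁⁻¹ *ᵥ u₁ := quad_ineq h1 u₁ y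
    have k2 : 2 * (y ⬝ᵥ u₂) - y ⬝ᵥ P₂ *ᵥ y ≤ u₂ ⬝ᵥ P₂⁻¹ *ᵥ u₂ := quad_ineq h2 u₂ y
    rw [hq, hyu, hyPy]
    nlinarith [mul_le_mul_of_nonneg_left k1 ht0,
      mul_le_mul_of_nonneg_left k2 (by linarith : (0:ℝ) ≤ 1 - t)]

private lemma logdet_concave {m : ℕ} {A B : Matrix (Fin m) (Fin m) ℝ} (hA : A.PosDef) (hB : B.PosDef)
    {t : ℝ} (ht0 : 0 ≤ t) (ht1 : t ≤ 1) :
    t * Real.log A.det + (1 - t) * Real.log B.det ≤ Real.log (t • A + (1 - t) • B).det := by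
  rcases eq_or_lt_of_le ht0 with h0 | h0
  · simp [← h0]
  rcases eq_or_lt_of_le ht1 with h1 | h1
  · simp [h1]
  have ht1' : 0 < 1 - t := by linarith
  set S := hA.posSemidef.sqrt with hSdef
  have hs : S.PosSemidef := hA.posSemidef.posSemidef_sqrt
  have hSS : S * S = A := hA.posSemidef.sqrt_mul_self
  have hdetS : S.det * S.det = A.det := by rw [← Matrix.det_mul, hSS]
  have hdetSne : S.det ≠ 0 := by
    intro h; rw [h, mul_zero] at hdetS; exact (hA.det_pos.ne') hdetS.symm
  have hSinv : S * S⁻¹ = 1 := Matrix.mul_nonsing_inv _ (by simpa using hdetSne)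
  have hSinv' : S⁻¹ * S = 1 := Matrix.nonsing_inv_mul _ (by simpa using hdetSne)
  set M := S⁻¹ * B * S⁻¹ with hMdef
  have hSinvH : S⁻¹.IsHermitian := hs.1.inv
  have hsymm : S⁻¹ᵀ = S⁻¹ := by rw [← real_conjTranspose']; exact hSinvH.eq
  have hMpsd : M.PosSemidef := by
    have := hB.posSemidef.conjTranspose_mul_mul_same S⁻¹
    rwa [hSinvH.eq] at this
  have hMpd : M.PosDef := by
    refine Matrix.PosDef.of_dotProduct_mulVec_pos hMpsd.1 fun x hx => ?_
    have hx' : S⁻¹ *ᵥ x ≠ 0 := by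
      intro h
      apply hx
      have h2 : (S * S⁻¹) *ᵥ x = S *ᵥ (S⁻¹ *ᵥ x) := by rw [← Matrix.mulVec_mulVec]
      rw [hSinv, Matrix.one_mulVec, h, Matrix.mulVec_zero] at h2
      exact h2
    have hq := hB.dotProduct_mulVec_pos hx'
    have heq : star x ⬝ᵥ M *ᵥ x = star (S⁻¹ *ᵥ x) ⬝ᵥ B *ᵥ (S⁻¹ *ᵥ x) := by
      rw [_root_.star_vec, _root_.star_vec]
      rw [hMdef, ← Matrix.mulVec_mulVec, ← Matrix.mulVec_mulVec, Matrix.dotProduct_mulVec]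
      rw [← Matrix.mulVec_transpose, hsymm]
    rw [heq]; exact hq
  have hSMS : S * M * S = B := by
    rw [hMdef]
    calc S * (S⁻¹ * B * S⁻¹) * S = (S * S⁻¹) * B * (S⁻¹ * S) := by
          simp only [Matrix.mul_assoc]
      _ = B := by rw [hSinv, hSinv', Matrix.one_mul, Matrix.mul_one]
  set N : Matrix (Fin m) (Fin m) ℝ := t • (1 : Matrix (Fin m) (Fin m) ℝ) + (1 - t) • M with hNdef
  have hmix : t • A + (1 - t) • B = S * N * S := by
    rw [hNdef, Matrix.mul_add, Matrix.add_mul, Matrix.mul_smul, Matrix.smul_mul,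
      Matrix.mul_smul, Matrix.smul_mul, Matrix.mul_one, hSS, hSMS]
  have hdetmix : (t • A + (1 - t) • B).det = A.det * N.det := by
    rw [hmix, Matrix.det_mul, Matrix.det_mul,
      show S.det * N.det * S.det = (S.det * S.det) * N.det by ring, hdetS]
  set d : Fin m → ℝ := fun i => t + (1 - t) * hMpsd.1.eigenvalues i with hd
  have hdpos : ∀ i, 0 < d i := fun i =>
    add_pos h0 (mul_pos ht1' (hMpd.eigenvalues_pos i))
  set U : Matrix (Fin m) (Fin m) ℝ := (IsHermitian.eigenvectorUnitary hMpsd.1 : Matrix (Fin m) (Fin m) ℝ) with hU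
  have hUU : U * star U = 1 :=
    (Matrix.mem_unitaryGroup_iff).mp (IsHermitian.eigenvectorUnitary hMpsd.1).2
  have hspec : M = U * Matrix.diagonal (hMpsd.1.eigenvalues) * star U := by
    have := hMpsd.1.spectral_theorem
    simpa using this
  have hdiag : Matrix.diagonal d = t • (1 : Matrix (Fin m) (Fin m) ℝ)
      + (1 - t) • Matrix.diagonal (hMpsd.1.eigenvalues) := by
    ext i j
    by_cases h : i = j <;> simp [hd, Matrix.diagonal, Matrix.one_apply, h]
  have hNspec : N = U * Matrix.diagonal d * star U := by
    rw [hdiag, Matrix.mul_add, Matrix.add_mul, Matrix.mul_smul, Matrix.smul_mul,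
      Matrix.mul_smul, Matrix.smul_mul, Matrix.mul_one, hUU, ← hspec, hNdef]
  have hdetU : U.det * (star U).det = 1 := by rw [← Matrix.det_mul, hUU, Matrix.det_one]
  have hdetN : N.det = ∏ i, d i := by
    rw [hNspec, Matrix.det_mul, Matrix.det_mul,
      show U.det * (Matrix.diagonal d).det * (star U).det
        = (U.det * (star U).det) * (Matrix.diagonal d).det by ring,
      hdetU, one_mul, Matrix.det_diagonal]
  have hdetNpos : 0 < N.det := by
    rw [hdetN]; exact Finset.prod_pos fun i _ => hdpos i
  have hdetM : M.det = B.det / A.det := by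
    rw [hMdef, Matrix.det_mul, Matrix.det_mul, Matrix.det_nonsing_inv, Ring.inverse_eq_inv']
    rw [← hdetS]; field_simp
  have hdetMprod : M.det = ∏ i, hMpsd.1.eigenvalues i := by
    have := hMpsd.1.det_eq_prod_eigenvalues
    simpa using this
  have hlogN : (1 - t) * Real.log M.det ≤ Real.log N.det := by
    rw [hdetN, Real.log_prod fun i _ => (hdpos i).ne', hdetMprod,
      Real.log_prod fun i _ => (hMpd.eigenvalues_pos i).ne', Finset.mul_sum]
    refine Finset.sum_le_sum fun i _ => ?_
    have hc := (strictConcaveOn_log_Ioi.concaveOn).2 (Set.mem_Ioi.mpr one_pos)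
      (Set.mem_Ioi.mpr (hMpd.eigenvalues_pos i)) ht0 (le_of_lt ht1') (by ring)
    simpa [smul_eq_mul, Real.log_one] using hc
  have hfin : Real.log (t • A + (1 - t) • B).det = Real.log A.det + Real.log N.det := by
    rw [hdetmix, Real.log_mul hA.det_pos.ne' hdetNpos.ne']
  rw [hfin]
  have hlogM : Real.log M.det = Real.log B.det - Real.log A.det := by
    rw [hdetM, Real.log_div hB.det_pos.ne' hA.det_pos.ne']
  rw [hlogM] at hlogN
  linarith

private lemma rpow_convex_comb {a b c t β : ℝ} (hβ : 1 ≤ β) (ht0 : 0 ≤ t) (ht1 : t ≤ 1)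
    (ha : 0 ≤ a) (hb : 0 ≤ b) (hc : 0 ≤ c) (h : a ≤ t * b + (1 - t) * c) :
    Real.rpow a β ≤ t * Real.rpow b β + (1 - t) * Real.rpow c β := by
  have h1 : Real.rpow a β ≤ Real.rpow (t * b + (1 - t) * c) β :=
    Real.rpow_le_rpow ha h (by linarith)
  have h2 := (convexOn_rpow hβ).2 (Set.mem_Ici.mpr hb) (Set.mem_Ici.mpr hc) ht0
    (by linarith : (0:ℝ) ≤ 1 - t) (by ring)
  simp only [smul_eq_mul] at h2
  calc Real.rpow a β ≤ Real.rpow (t * b + (1 - t) * c) β := h1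
    _ ≤ t * Real.rpow b β + (1 - t) * Real.rpow c β := h2

private lemma l1norm_convex {m n : ℕ} (A B : Matrix (Fin m) (Fin n) ℝ) {t : ℝ}
    (ht0 : 0 ≤ t) (ht1 : t ≤ 1) :
    l1norm (t • A + (1 - t) • B) ≤ t * l1norm A + (1 - t) * l1norm B := by
  unfold l1norm
  rw [Finset.mul_sum, Finset.mul_sum, ← Finset.sum_add_distrib]
  refine Finset.sum_le_sum fun i _ => ?_
  rw [Finset.mul_sum, Finset.mul_sum, ← Finset.sum_add_distrib]
  refine Finset.sum_le_sum fun j _ => ?_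
  simp only [Matrix.add_apply, Matrix.smul_apply, smul_eq_mul]
  calc |t * A i j + (1 - t) * B i j| ≤ |t * A i j| + |(1 - t) * B i j| := abs_add_le _ _
    _ = t * |A i j| + (1 - t) * |B i j| := by
        rw [abs_mul, abs_mul, abs_of_nonneg ht0, abs_of_nonneg (by linarith : (0:ℝ) ≤ 1 - t)]

private lemma l1minus_convex {m : ℕ} (A B : Matrix (Fin m) (Fin m) ℝ) {t : ℝ}
    (ht0 : 0 ≤ t) (ht1 : t ≤ 1) :
    l1minus (t • A + (1 - t) • B) ≤ t * l1minus A + (1 - t) * l1minus B := by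
  unfold l1minus
  rw [Finset.mul_sum, Finset.mul_sum, ← Finset.sum_add_distrib]
  refine Finset.sum_le_sum fun i _ => ?_
  rw [Finset.mul_sum, Finset.mul_sum, ← Finset.sum_add_distrib]
  refine Finset.sum_le_sum fun j _ => ?_
  by_cases h : i = j
  · simp [h]
  · simp only [Matrix.add_apply, Matrix.smul_apply, smul_eq_mul, if_neg h]
    calc |t * A i j + (1 - t) * B i j| ≤ |t * A i j| + |(1 - t) * B i j| := abs_add_le _ _
      _ = t * |A i j| + (1 - t) * |B i j| := by
          rw [abs_mul, abs_mul, abs_of_nonneg ht0, abs_of_nonneg (by linarith : (0:ℝ) ≤ 1 - t)]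

end AuxLemmas
theorem objective_jointly_convex {q p : ℕ}
    (Syy : Matrix (Fin q) (Fin q) ℝ) (Syx : Matrix (Fin q) (Fin p) ℝ)
    (Sxx : Matrix (Fin p) (Fin p) ℝ) (L : Matrix (Fin p) (Fin p) ℝ)
    (hSyy : Syy.PosSemidef) (hSxx : Sxx.PosSemidef) (hL : L.PosSemidef)
    (β η lam mu : ℝ) (hβ : 1 ≤ β) (hη : 0 ≤ η) (hlam : 0 ≤ lam) (hmu : 0 ≤ mu)
    (f : Matrix (Fin q) (Fin q) ℝ → Matrix (Fin q) (Fin p) ℝ → ℝ)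
    (hf : ∀ P Q, f P Q = -Real.log P.det + fip Syy P + 2 * fip Syx Q
        + fip Sxx (Qᵀ * P⁻¹ * Q) + η * Real.rpow (fip L (Qᵀ * P⁻¹ * Q)) β
        + lam * l1minus P + mu * l1norm Q) :
    ∀ (P₁ P₂ : Matrix (Fin q) (Fin q) ℝ) (Q₁ Q₂ : Matrix (Fin q) (Fin p) ℝ),
      P₁.PosDef → P₂.PosDef → ∀ t : ℝ, 0 ≤ t → t ≤ 1 →
        f (t • P₁ + (1 - t) • P₂) (t • Q₁ + (1 - t) • Q₂)
          ≤ t * f P₁ Q₁ + (1 - t) * f P₂ Q₂ := by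
  intro P₁ P₂ Q₁ Q₂ hP₁ hP₂ t ht0 ht1
  set P : Matrix (Fin q) (Fin q) ℝ := t • P₁ + (1 - t) • P₂ with hP
  set Q : Matrix (Fin q) (Fin p) ℝ := t • Q₁ + (1 - t) • Q₂ with hQ
  have hPmix : P.PosDef := mix_posDef hP₁ hP₂ ht0 ht1
  rw [hf, hf, hf]
  -- log det term
  have H1 := logdet_concave hP₁ hP₂ ht0 ht1
  -- linear terms
  have H2 : fip Syy P = t * fip Syy P₁ + (1 - t) * fip Syy P₂ := fip_add_smul _ _ _ _ _
  have H3 : fip Syx Q = t * fip Syx Q₁ + (1 - t) * fip Syx Q₂ := fip_add_smul _ _ _ _ _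
  -- Schur term
  have hD := schur_mix hP₁ hP₂ ht0 ht1 (Q₁ := Q₁) (Q₂ := Q₂)
  have hM₁ : (Q₁ᵀ * P₁⁻¹ * Q₁).PosSemidef := psd_tmul Q₁ hP₁.inv.posSemidef
  have hM₂ : (Q₂ᵀ * P₂⁻¹ * Q₂).PosSemidef := psd_tmul Q₂ hP₂.inv.posSemidef
  have hM : (Qᵀ * P⁻¹ * Q).PosSemidef := psd_tmul Q hPmix.inv.posSemidef
  have key : ∀ (S : Matrix (Fin p) (Fin p) ℝ), S.PosSemidef →
      fip S (Qᵀ * P⁻¹ * Q) ≤ t * fip S (Q₁ᵀ * P₁⁻¹ * Q₁) + (1 - t) * fip S (Q₂ᵀ * P₂⁻¹ * Q₂) := by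
    intro S hS
    have h0 := fip_nonneg hS hD
    rw [fip_sub, fip_add_smul] at h0
    linarith
  have H4 := key Sxx hSxx
  -- rpow term
  have hb0 : 0 ≤ fip L (Qᵀ * P⁻¹ * Q) := fip_nonneg hL hM
  have hb1 : 0 ≤ fip L (Q₁ᵀ * P₁⁻¹ * Q₁) := fip_nonneg hL hM₁
  have hb2 : 0 ≤ fip L (Q₂ᵀ * P₂⁻¹ * Q₂) := fip_nonneg hL hM₂
  have H5 := rpow_convex_comb hβ ht0 ht1 hb0 hb1 hb2 (key L hL)
  have H5' : η * Real.rpow (fip L (Qᵀ * P⁻¹ * Q)) β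
      ≤ t * (η * Real.rpow (fip L (Q₁ᵀ * P₁⁻¹ * Q₁)) β)
        + (1 - t) * (η * Real.rpow (fip L (Q₂ᵀ * P₂⁻¹ * Q₂)) β) := by
    have := mul_le_mul_of_nonneg_left H5 hη
    nlinarith [this]
  -- l1 terms
  have H6 := l1minus_convex P₁ P₂ ht0 ht1
  have H6' : lam * l1minus P ≤ t * (lam * l1minus P₁) + (1 - t) * (lam * l1minus P₂) := by
    have := mul_le_mul_of_nonneg_left H6 hlam
    nlinarith [this]
  have H7 := l1norm_convex Q₁ Q₂ ht0 ht1
  have H7' : mu * l1norm Q ≤ t * (mu * l1norm Q₁) + (1 - t) * (mu * l1norm Q₂) := by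
    have := mul_le_mul_of_nonneg_left H7 hmu
    nlinarith [this]
  linarith [H1, H2, H3, H4, H5', H6', H7']
end
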